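/- Let X be a finite set of unit vectors in R^d with probability distribution μ, and suppose there exists an invertible linear transformation T: R^d → R^d such that (X_T, μ_T) is in isotropic position (exactly). Then for every 0 < k < d and every k-dimensional subspace V, either μ(X ∩ V) < k/d, or μ(X ∩ V) = k/d and the points of X with positive μ-mass outside V lie in a (d−k)-dimensional subspace. -/

import Mathlib

open scoped RealInnerProductSpace BigOperators Classical

/-- If `(X,μ)` can be put into exact isotropic position by some invertible
linear transformation, then every `k`-dimensional subspace `V` (`0 < k < d`) satisfies
either `μ(X∩V) < k/d`, or `μ(X∩V) = k/d` with the positive-mass points outside `V`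
contained in a `(d−k)`-dimensional subspace. -/
theorem stmt_14 (d : ℕ) (hd : 0 < d)
    (X : Finset (EuclideanSpace ℝ (Fin d))) (μ : EuclideanSpace ℝ (Fin d) → ℝ)
    (hμ0 : ∀ x ∈ X, 0 ≤ μ x) (hμ1 : ∑ x ∈ X, μ x = 1) (hunit : ∀ x ∈ X, ‖x‖ = 1)
    (T : EuclideanSpace ℝ (Fin d) ≃ₗ[ℝ] EuclideanSpace ℝ (Fin d))
    (hiso : ∀ v : EuclideanSpace ℝ (Fin d), v ≠ 0 →
      ∑ x ∈ X, μ x * ⟪T x, v⟫ ^ 2 / (‖T x‖ ^ 2 * ‖v‖ ^ 2) = 1 / d) :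
    ∀ k : ℕ, 0 < k → k < d →
      ∀ V : Submodule ℝ (EuclideanSpace ℝ (Fin d)), Module.finrank ℝ V = k →
        (∑ x ∈ X.filter (fun x => x ∈ V), μ x < (k : ℝ) / d) ∨
        ((∑ x ∈ X.filter (fun x => x ∈ V), μ x = (k : ℝ) / d) ∧
          ∃ W : Submodule ℝ (EuclideanSpace ℝ (Fin d)), Module.finrank ℝ W = d - k ∧
            ∀ x ∈ X, 0 < μ x → x ∉ V → x ∈ W) := by
  intro k hk hkd V hV
  classical
  have hdim : Module.finrank ℝ (EuclideanSpace ℝ (Fin d)) = d := finrank_euclideanSpace_fin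
  have hTne : ∀ x ∈ X, T x ≠ 0 := by
    intro x hx h
    have hx1 := hunit x hx
    have hx0 : x = 0 := by
      have := congrArg T.symm h
      simpa using this
    rw [hx0] at hx1; simp at hx1
  set y : EuclideanSpace ℝ (Fin d) → EuclideanSpace ℝ (Fin d) :=
    fun x => ‖T x‖⁻¹ • T x with hy
  have hynorm : ∀ x ∈ X, ‖y x‖ = 1 := by
    intro x hx
    have h0 : ‖T x‖ ≠ 0 := norm_ne_zero_iff.mpr (hTne x hx)
    simp [hy, norm_smul, abs_of_nonneg (inv_nonneg.mpr (norm_nonneg _)),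
      inv_mul_cancel₀ h0]
  have hiso' : ∀ v : EuclideanSpace ℝ (Fin d), v ≠ 0 →
      ∑ x ∈ X, μ x * ⟪y x, v⟫ ^ 2 = ‖v‖ ^ 2 / d := by
    intro v hv
    have hv0 : ‖v‖ ≠ 0 := norm_ne_zero_iff.mpr hv
    have h := hiso v hv
    have hterm : ∑ x ∈ X, μ x * ⟪y x, v⟫ ^ 2
        = ∑ x ∈ X, (μ x * ⟪T x, v⟫ ^ 2 / (‖T x‖ ^ 2 * ‖v‖ ^ 2)) * ‖v‖ ^ 2 := by
      refine Finset.sum_congr rfl fun x hx => ?_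
      have h0 : ‖T x‖ ≠ 0 := norm_ne_zero_iff.mpr (hTne x hx)
      simp only [hy, real_inner_smul_left]
      field_simp
    rw [hterm, ← Finset.sum_mul, h]
    ring
  set V' : Submodule ℝ (EuclideanSpace ℝ (Fin d)) :=
    V.map (T : EuclideanSpace ℝ (Fin d) →ₗ[ℝ] EuclideanSpace ℝ (Fin d)) with hV'def
  have hV'rank : Module.finrank ℝ V' = k := by
    rw [hV'def, LinearEquiv.finrank_map_eq]; exact hV
  set n := Module.finrank ℝ V' with hn
  let e : OrthonormalBasis (Fin n) ℝ V' := stdOrthonormalBasis ℝ V'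
  have henorm : ∀ i, ‖(e i : EuclideanSpace ℝ (Fin d))‖ = 1 := fun i => e.orthonormal.1 i
  have hene : ∀ i, (e i : EuclideanSpace ℝ (Fin d)) ≠ 0 := by
    intro i h; have := henorm i; rw [h] at this; simp at this
  set f : EuclideanSpace ℝ (Fin d) → ℝ :=
    fun x => ∑ i, ⟪y x, (e i : EuclideanSpace ℝ (Fin d))⟫ ^ 2 with hf
  have hf0 : ∀ x, 0 ≤ f x := fun x => Finset.sum_nonneg fun i _ => sq_nonneg _
  have hsum : ∑ x ∈ X, μ x * f x = (k : ℝ) / d := by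
    calc ∑ x ∈ X, μ x * f x
        = ∑ x ∈ X, ∑ i : Fin n, μ x * ⟪y x, (e i : EuclideanSpace ℝ (Fin d))⟫ ^ 2 := by
          simp [hf, Finset.mul_sum]
      _ = ∑ i : Fin n, ∑ x ∈ X, μ x * ⟪y x, (e i : EuclideanSpace ℝ (Fin d))⟫ ^ 2 :=
          Finset.sum_comm
      _ = ∑ _i : Fin n, (1 : ℝ) / d := by
          refine Finset.sum_congr rfl fun i _ => ?_
          rw [hiso' _ (hene i), henorm i]; norm_num
      _ = (k : ℝ) / d := by
          rw [Finset.sum_const, Finset.card_univ, Fintype.card_fin, nsmul_eq_mul, hV'rank]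
          ring
  have hfV : ∀ x ∈ X, x ∈ V → f x = 1 := by
    intro x hx hxV
    have hTxV : T x ∈ V' := Submodule.mem_map_of_mem hxV
    have hyV : y x ∈ V' := Submodule.smul_mem _ _ hTxV
    set y' : V' := ⟨y x, hyV⟩ with hy'
    have h1 : f x = ∑ i, ⟪y', e i⟫ * ⟪e i, y'⟫ := by
      refine Finset.sum_congr rfl fun i _ => ?_
      have hA : ⟪y', e i⟫ = ⟪y x, (e i : EuclideanSpace ℝ (Fin d))⟫ := rfl
      have hB : ⟪e i, y'⟫ = ⟪(e i : EuclideanSpace ℝ (Fin d)), y x⟫ := rfl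
      rw [hA, hB, real_inner_comm ((e i : EuclideanSpace ℝ (Fin d))) (y x), sq]
    rw [h1, e.sum_inner_mul_inner]
    have hy1 : ‖y'‖ = 1 := by
      have : ‖y'‖ = ‖y x‖ := rfl
      rw [this]; exact hynorm x hx
    rw [real_inner_self_eq_norm_sq, hy1]; norm_num
  have hsplit := Finset.sum_filter_add_sum_filter_not X (fun x => x ∈ V)
    (fun x => μ x * f x)
  have hS1 : ∑ x ∈ X.filter (fun x => x ∈ V), μ x * f x
      = ∑ x ∈ X.filter (fun x => x ∈ V), μ x := by
    refine Finset.sum_congr rfl fun x hx => ?_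
    rw [Finset.mem_filter] at hx
    rw [hfV x hx.1 hx.2, mul_one]
  have hR0 : 0 ≤ ∑ x ∈ X.filter (fun x => ¬ x ∈ V), μ x * f x :=
    Finset.sum_nonneg fun x hx =>
      mul_nonneg (hμ0 x (Finset.mem_filter.mp hx).1) (hf0 _)
  have hle : ∑ x ∈ X.filter (fun x => x ∈ V), μ x ≤ (k : ℝ) / d := by
    rw [← hS1]; linarith [hsplit, hsum]
  rcases lt_or_eq_of_le hle with h | h
  · exact Or.inl h
  · right
    refine ⟨h, ?_⟩
    have hR : ∑ x ∈ X.filter (fun x => ¬ x ∈ V), μ x * f x = 0 := by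
      have := hsplit
      rw [hS1, h, hsum] at this
      linarith
    have hterm : ∀ x ∈ X.filter (fun x => ¬ x ∈ V), μ x * f x = 0 :=
      (Finset.sum_eq_zero_iff_of_nonneg fun x hx =>
        mul_nonneg (hμ0 x (Finset.mem_filter.mp hx).1) (hf0 _)).mp hR
    refine ⟨(V'ᗮ).map (T.symm : EuclideanSpace ℝ (Fin d) →ₗ[ℝ] EuclideanSpace ℝ (Fin d)),
      ?_, ?_⟩
    · rw [LinearEquiv.finrank_map_eq]
      have h2 := Submodule.finrank_add_finrank_orthogonal V'
      rw [hdim, ← hn, hV'rank] at h2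
      omega
    · intro x hx hμx hxV
      have hfx : f x = 0 := by
        have h3 := hterm x (Finset.mem_filter.mpr ⟨hx, hxV⟩)
        rcases mul_eq_zero.mp h3 with h' | h'
        · exact absurd h' (ne_of_gt hμx)
        · exact h'
      have hin : ∀ i, ⟪y x, (e i : EuclideanSpace ℝ (Fin d))⟫ = 0 := by
        intro i
        have h4 := (Finset.sum_eq_zero_iff_of_nonneg fun i _ => sq_nonneg _).mp hfx i
          (Finset.mem_univ i)
        exact pow_eq_zero_iff two_ne_zero |>.mp h4
      have hinT : ∀ i, ⟪T x, (e i : EuclideanSpace ℝ (Fin d))⟫ = 0 := by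
        intro i
        have h0 : ‖T x‖ ≠ 0 := norm_ne_zero_iff.mpr (hTne x hx)
        have h5 := hin i
        simp only [hy, real_inner_smul_left] at h5
        rcases mul_eq_zero.mp h5 with h' | h'
        · exact absurd h' (inv_ne_zero h0)
        · exact h'
      have hTmem : T x ∈ V'ᗮ := by
        rw [Submodule.mem_orthogonal]
        intro u hu
        set u' : V' := ⟨u, hu⟩ with hu'
        have hrepr : (u : EuclideanSpace ℝ (Fin d))
            = ∑ i, e.repr u' i • (e i : EuclideanSpace ℝ (Fin d)) := by
          have := congrArg (Subtype.val) (e.sum_repr u')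
          simpa using this.symm
        rw [hrepr, sum_inner]
        refine Finset.sum_eq_zero fun i _ => ?_
        rw [real_inner_smul_left, real_inner_comm, hinT i, mul_zero]
      exact Submodule.mem_map.mpr ⟨T x, hTmem, by simp⟩
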